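/- Let K be a field, let φ ∈ Aff_n(K) be an invertible affine change of coordinates acting on S = K[X_0,…,X_{n−1}] by substituting each variable X_i with the corresponding affine-linear form, and let E ⊆ S be finite. Then φ(V_{E,d}) = V_{φ(E),d} for every d ∈ ℕ. -/

import Mathlib

open MvPolynomial

/-- `V_{E,d}`: the smallest `k`-subspace of the polynomial ring containing every `f ∈ E`
of total degree at most `d` and closed under multiplication by ring elements
as long as the degree stays at most `d`. -/
noncomputable def Vspace {k : Type*} [Field k] {σ : Type*} (E : Finset (MvPolynomial σ k)) (d : ℕ) :
    Submodule k (MvPolynomial σ k) :=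
  sInf {W | (∀ f ∈ E, f.totalDegree ≤ d → f ∈ W) ∧
            ∀ g ∈ W, ∀ h : MvPolynomial σ k, (g * h).totalDegree ≤ d → g * h ∈ W}

section Aux

variable {k : Type*} [Field k] {σ : Type*}

lemma Vspace_mem_of {E : Finset (MvPolynomial σ k)} {d : ℕ} {f : MvPolynomial σ k}
    (hf : f ∈ E) (hdeg : f.totalDegree ≤ d) : f ∈ Vspace E d := by
  rw [Vspace, Submodule.mem_sInf]
  exact fun W hW => hW.1 f hf hdeg

lemma Vspace_mul_mem {E : Finset (MvPolynomial σ k)} {d : ℕ} {g : MvPolynomial σ k}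
    (hg : g ∈ Vspace E d) (h : MvPolynomial σ k) (hdeg : (g * h).totalDegree ≤ d) :
    g * h ∈ Vspace E d := by
  rw [Vspace, Submodule.mem_sInf] at *
  exact fun W hW => hW.2 g (hg W hW) h hdeg

/-- Mapping `Vspace` along a degree-nonincreasing algebra automorphism (given by a pair of
mutually inverse algebra homs). -/
lemma map_Vspace_of [DecidableEq (MvPolynomial σ k)]
    (F G : MvPolynomial σ k →ₐ[k] MvPolynomial σ k)
    (hFG : F.comp G = AlgHom.id k _) (hGF : G.comp F = AlgHom.id k _)
    (hF : ∀ p : MvPolynomial σ k, (F p).totalDegree ≤ p.totalDegree)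
    (hG : ∀ p : MvPolynomial σ k, (G p).totalDegree ≤ p.totalDegree)
    (E : Finset (MvPolynomial σ k)) (d : ℕ) :
    Submodule.map F.toLinearMap (Vspace E d) = Vspace (E.image F) d := by
  have hGFp : ∀ p, G (F p) = p := fun p => AlgHom.congr_fun hGF p
  have hFGp : ∀ p, F (G p) = p := fun p => AlgHom.congr_fun hFG p
  have hdeg : ∀ p : MvPolynomial σ k, (F p).totalDegree = p.totalDegree := by
    intro p
    refine le_antisymm (hF p) ?_
    conv_lhs => rw [← hGFp p]
    exact hG (F p)
  apply le_antisymm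
  · rw [Submodule.map_le_iff_le_comap]
    apply sInf_le
    constructor
    · intro f hf hd
      have h1 : F f ∈ E.image F := Finset.mem_image_of_mem _ hf
      simp only [Submodule.mem_comap, AlgHom.toLinearMap_apply]
      exact Vspace_mem_of h1 (by rw [hdeg]; exact hd)
    · intro g hg h hd
      have : F (g * h) = F g * F h := map_mul F g h
      simp only [Submodule.mem_comap, AlgHom.toLinearMap_apply, this] at hg ⊢
      exact Vspace_mul_mem hg (F h) (by rw [← this, hdeg]; exact hd)
  · apply sInf_le
    constructor
    · intro f hf hd
      rcases Finset.mem_image.mp hf with ⟨g, hg, rfl⟩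
      exact Submodule.mem_map_of_mem (Vspace_mem_of hg (by rw [← hdeg]; exact hd))
    · rintro g hg h hd
      rcases hg with ⟨g', hg', rfl⟩
      simp only [AlgHom.toLinearMap_apply] at hd ⊢
      have key : F g' * h = F (g' * G h) := by rw [map_mul, hFGp]
      rw [key] at hd ⊢
      exact Submodule.mem_map_of_mem
        (Vspace_mul_mem hg' (G h) (by rw [← hdeg]; exact hd))

end Aux

section Affine

variable {K : Type*} [Field K] {n : ℕ}

/-- The family of affine-linear forms determined by a matrix and a vector. -/
noncomputable abbrev affFun (M : Matrix (Fin n) (Fin n) K) (c : Fin n → K) : Fin n → MvPolynomial (Fin n) K :=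
  fun i => (∑ j : Fin n, C (M i j) * X j) + C (c i)

lemma aff_comp (M N : Matrix (Fin n) (Fin n) K) (c e : Fin n → K) :
    (aeval (affFun M c)).comp (aeval (affFun N e)) =
      (aeval (affFun (N * M) (N.mulVec c + e)) :
        MvPolynomial (Fin n) K →ₐ[K] MvPolynomial (Fin n) K) := by
  apply MvPolynomial.algHom_ext
  intro i
  simp only [AlgHom.comp_apply, aeval_X, affFun, map_add, map_sum, map_mul, aeval_C,
    algebraMap_eq, Matrix.mul_apply, Matrix.mulVec, dotProduct, Pi.add_apply, map_sum,
    Finset.mul_sum, mul_add]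
  rw [Finset.sum_add_distrib, Finset.sum_comm]
  simp only [← C_mul, ← mul_assoc]
  rw [add_assoc]
  congr 1
  refine Finset.sum_congr rfl fun j _ => ?_
  rw [Finset.sum_mul]

lemma aff_id : (aeval (affFun (1 : Matrix (Fin n) (Fin n) K) 0)) =
    AlgHom.id K (MvPolynomial (Fin n) K) := by
  apply MvPolynomial.algHom_ext
  intro i
  simp [affFun, Matrix.one_apply, apply_ite C, ite_mul, Finset.sum_ite_eq]

lemma affFun_deg (M : Matrix (Fin n) (Fin n) K) (c : Fin n → K) (i : Fin n) :
    (affFun M c i).totalDegree ≤ 1 := by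
  refine le_trans (totalDegree_add _ _) (max_le ?_ (by simp))
  refine totalDegree_finsetSum_le fun j _ => ?_
  refine le_trans (totalDegree_mul _ _) ?_
  simp [totalDegree_X]

lemma deg_aeval_le (φ : Fin n → MvPolynomial (Fin n) K) (hφ : ∀ i, (φ i).totalDegree ≤ 1)
    (p : MvPolynomial (Fin n) K) : (aeval φ p).totalDegree ≤ p.totalDegree := by
  conv_lhs => rw [p.as_sum]
  rw [map_sum]
  refine totalDegree_finsetSum_le fun s hs => ?_
  rw [aeval_monomial]
  refine le_trans (totalDegree_mul _ _) ?_
  have h1 : (algebraMap K (MvPolynomial (Fin n) K) (coeff s p)).totalDegree = 0 := by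
    rw [algebraMap_eq]; exact totalDegree_C _
  rw [h1, zero_add]
  have h2 : (s.prod fun i k => φ i ^ k).totalDegree ≤ s.sum fun _ e => e := by
    rw [Finsupp.prod, Finsupp.sum]
    refine le_trans (totalDegree_finset_prod _ _) ?_
    refine Finset.sum_le_sum fun i _ => ?_
    refine le_trans (totalDegree_pow _ _) ?_
    calc s i * (φ i).totalDegree ≤ s i * 1 := Nat.mul_le_mul_left _ (hφ i)
      _ = s i := mul_one _
  exact le_trans h2 (le_totalDegree hs)

end Affine

/-- An invertible affine change of coordinates maps `V_{E,d}` onto `V_{φ(E),d}`. -/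
theorem map_Vspace_affine {K : Type*} [Field K] [DecidableEq K] {n : ℕ}
    (A : Matrix (Fin n) (Fin n) K) (hA : IsUnit A) (b : Fin n → K)
    (E : Finset (MvPolynomial (Fin n) K)) (d : ℕ) :
    Submodule.map
      (MvPolynomial.aeval (fun i : Fin n =>
        (∑ j : Fin n, C (A i j) * X j) + C (b i)) :
          MvPolynomial (Fin n) K →ₐ[K] MvPolynomial (Fin n) K).toLinearMap
      (Vspace E d) =
    Vspace (E.image (MvPolynomial.aeval (fun i : Fin n =>
        (∑ j : Fin n, C (A i j) * X j) + C (b i)) :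
          MvPolynomial (Fin n) K →ₐ[K] MvPolynomial (Fin n) K)) d := by
  have hdet : IsUnit A.det := (Matrix.isUnit_iff_isUnit_det A).mp hA
  have hmul : A * A⁻¹ = 1 := Matrix.mul_nonsing_inv A hdet
  have hmul' : A⁻¹ * A = 1 := Matrix.nonsing_inv_mul A hdet
  have hFG : (aeval (affFun A b)).comp (aeval (affFun A⁻¹ (-(A⁻¹.mulVec b)))) =
      AlgHom.id K (MvPolynomial (Fin n) K) := by
    rw [aff_comp, hmul']
    have hz : A⁻¹.mulVec b + -A⁻¹.mulVec b = 0 := by simp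
    rw [hz]
    exact aff_id
  have hGF : (aeval (affFun A⁻¹ (-(A⁻¹.mulVec b)))).comp (aeval (affFun A b)) =
      AlgHom.id K (MvPolynomial (Fin n) K) := by
    rw [aff_comp, hmul]
    have hz : A.mulVec (-A⁻¹.mulVec b) + b = 0 := by
      rw [Matrix.mulVec_neg, Matrix.mulVec_mulVec, hmul, Matrix.one_mulVec]; simp
    rw [hz]
    exact aff_id
  exact map_Vspace_of _ _ hFG hGF
    (deg_aeval_le _ (affFun_deg A b)) (deg_aeval_le _ (affFun_deg A⁻¹ _)) E d
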